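/- Let (e_i) be an orthonormal sequence of independent mean-zero random variables in real L²(μ) spanning a subspace E with ‖|u| ∧ |v|‖ ≥ γ for all norm-one u, v ∈ E. Let (f_i) be normalized independent mean-zero random variables with (e_i, f_j) independent for i ≠ j and sup_i ‖e_i - f_i‖ ≤ γ/4. Then for any norm-one x, y ∈ span(f_i), ‖|x| ∧ |y|‖ ≥ γ/2; in particular span(f_i) does stable phase retrieval in L². -/

import Mathlib

open MeasureTheory ProbabilityTheory

section SPRAux

variable {Ω : Type*} [MeasurableSpace Ω] {μ : Measure Ω} [IsProbabilityMeasure μ]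

private lemma SPR_inner_eq_zero_of_indep (g h : Lp ℝ 2 μ) (hind : IndepFun (⇑g) (⇑h) μ)
    (hg : ∫ ω, g ω ∂μ = 0) : (inner ℝ g h : ℝ) = 0 := by
  rw [MeasureTheory.L2.inner_def]
  simp only [RCLike.inner_apply, starRingEnd_apply, star_trivial]
  rw [hind.symm.integral_fun_mul_eq_mul_integral (Lp.aestronglyMeasurable h) (Lp.aestronglyMeasurable g), hg, mul_zero]

private lemma SPR_norm_sum_sq_of_ortho {H : Type*} [NormedAddCommGroup H]
    [InnerProductSpace ℝ H] (s : Finset ℕ) (g : ℕ → H)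
    (h : ∀ i ∈ s, ∀ j ∈ s, i ≠ j → (inner ℝ (g i) (g j) : ℝ) = 0) :
    ‖∑ i ∈ s, g i‖ ^ 2 = ∑ i ∈ s, ‖g i‖ ^ 2 := by
  rw [← real_inner_self_eq_norm_sq, sum_inner]
  refine Finset.sum_congr rfl fun i hi => ?_
  rw [inner_sum, Finset.sum_eq_single_of_mem i hi fun j hj hji => h i hi j hj hji.symm,
    real_inner_self_eq_norm_sq]

/-- Approximation of elements of the span of `f` by elements of the span of `e`. -/
private lemma SPR_key_approx (e f : ℕ → Lp ℝ 2 μ) (γ : ℝ)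
    (he_on : Orthonormal ℝ e) (hf_on : Orthonormal ℝ f)
    (hdiff : ∀ i j, i ≠ j → (inner ℝ (f i - e i) (f j - e j) : ℝ) = 0)
    (hclose : ∀ i, ‖e i - f i‖ ≤ γ / 4) (hγ : 0 ≤ γ)
    (x : Lp ℝ 2 μ) (hx : x ∈ Submodule.span ℝ (Set.range f)) :
    ∃ x' ∈ Submodule.span ℝ (Set.range e), ‖x'‖ = ‖x‖ ∧ ‖x - x'‖ ≤ γ / 4 * ‖x‖ := by
  rw [Finsupp.mem_span_range_iff_exists_finsupp] at hx
  obtain ⟨c, hc⟩ := hx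
  set s := c.support with hs
  have hxs : x = ∑ i ∈ s, c i • f i := by rw [← hc]; rfl
  refine ⟨∑ i ∈ s, c i • e i,
    Submodule.sum_mem _ fun i _ =>
      Submodule.smul_mem _ _ (Submodule.subset_span ⟨i, rfl⟩), ?_, ?_⟩
  · -- equal norms
    have h1 : ‖∑ i ∈ s, c i • e i‖ ^ 2 = ∑ i ∈ s, (c i) ^ 2 := by
      rw [SPR_norm_sum_sq_of_ortho s _ fun i _ j _ hij => by
        rw [real_inner_smul_left, real_inner_smul_right, he_on.2 hij, mul_zero, mul_zero]]
      refine Finset.sum_congr rfl fun i _ => ?_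
      rw [norm_smul, he_on.1 i, mul_one, Real.norm_eq_abs, sq_abs]
    have h2 : ‖x‖ ^ 2 = ∑ i ∈ s, (c i) ^ 2 := by
      rw [hxs, SPR_norm_sum_sq_of_ortho s _ fun i _ j _ hij => by
        rw [real_inner_smul_left, real_inner_smul_right, hf_on.2 hij, mul_zero, mul_zero]]
      refine Finset.sum_congr rfl fun i _ => ?_
      rw [norm_smul, hf_on.1 i, mul_one, Real.norm_eq_abs, sq_abs]
    have := h1.trans h2.symm
    have h3 : ‖∑ i ∈ s, c i • e i‖ ≤ ‖x‖ :=
      le_of_pow_le_pow_left₀ two_ne_zero (norm_nonneg _) this.le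
    have h4 : ‖x‖ ≤ ‖∑ i ∈ s, c i • e i‖ :=
      le_of_pow_le_pow_left₀ two_ne_zero (norm_nonneg _) this.ge
    exact le_antisymm h3 h4
  · -- distance bound
    have hdiffeq : x - ∑ i ∈ s, c i • e i = ∑ i ∈ s, c i • (f i - e i) := by
      rw [hxs, ← Finset.sum_sub_distrib]
      exact Finset.sum_congr rfl fun i _ => (smul_sub _ _ _).symm
    have h2 : ‖x‖ ^ 2 = ∑ i ∈ s, (c i) ^ 2 := by
      rw [hxs, SPR_norm_sum_sq_of_ortho s _ fun i _ j _ hij => by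
        rw [real_inner_smul_left, real_inner_smul_right, hf_on.2 hij, mul_zero, mul_zero]]
      refine Finset.sum_congr rfl fun i _ => ?_
      rw [norm_smul, hf_on.1 i, mul_one, Real.norm_eq_abs, sq_abs]
    have h5 : ‖x - ∑ i ∈ s, c i • e i‖ ^ 2 ≤ (γ / 4) ^ 2 * ‖x‖ ^ 2 := by
      rw [hdiffeq, SPR_norm_sum_sq_of_ortho s _ fun i _ j _ hij => by
        rw [real_inner_smul_left, real_inner_smul_right, hdiff i j hij, mul_zero, mul_zero],
        h2, Finset.mul_sum]
      refine Finset.sum_le_sum fun i _ => ?_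
      rw [norm_smul, Real.norm_eq_abs, mul_pow, sq_abs, mul_comm]
      have hfe : ‖f i - e i‖ ≤ γ / 4 := (norm_sub_rev (f i) (e i) ▸ hclose i)
      exact mul_le_mul_of_nonneg_right
        (pow_le_pow_left₀ (norm_nonneg _) hfe 2) (sq_nonneg _)
    have h6 : (γ / 4) ^ 2 * ‖x‖ ^ 2 = (γ / 4 * ‖x‖) ^ 2 := (mul_pow _ _ _).symm
    refine le_of_pow_le_pow_left₀ two_ne_zero ?_ (by rw [← h6]; exact h5)
    positivity

private lemma SPR_min_abs_le (a b : ℝ) : min |a - b| |a + b| ≤ |(|a| - |b|)| := by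
  rcases le_total 0 a with ha | ha <;> rcases le_total 0 b with hb | hb
  · refine (min_le_left _ _).trans_eq ?_
    rw [abs_of_nonneg ha, abs_of_nonneg hb]
  · refine (min_le_right _ _).trans_eq ?_
    rw [abs_of_nonneg ha, abs_of_nonpos hb, sub_neg_eq_add]
  · refine (min_le_right _ _).trans_eq ?_
    rw [abs_of_nonpos ha, abs_of_nonneg hb, show -a - b = -(a + b) by ring, abs_neg]
  · refine (min_le_left _ _).trans_eq ?_
    rw [abs_of_nonpos ha, abs_of_nonpos hb, show -a - -b = -(a - b) by ring, abs_neg]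

end SPRAux

/-- Perturbation of SPR subspaces of `L²` spanned by independent mean-zero random
variables: if the orthonormal family `(e i)` spans a subspace on which
`‖|u| ⊓ |v|‖ ≥ γ` for norm-one `u, v`, and `(f i)` are normalized independent mean-zero
random variables with `(e i, f j)` independent for `i ≠ j` and `‖e i - f i‖ ≤ γ/4`,
then `‖|x| ⊓ |y|‖ ≥ γ/2` for norm-one `x, y ∈ span(f i)`; in particular `span (f i)`
does stable phase retrieval in `L²`. -/
theorem SPR_perturbation_independent_L2 {Ω : Type*} [MeasurableSpace Ω] (μ : Measure Ω)
    [IsProbabilityMeasure μ] (e f : ℕ → Lp ℝ 2 μ) (γ : ℝ) (hγ : 0 < γ)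
    (he_on : Orthonormal ℝ e)
    (he_mean : ∀ i, ∫ ω, e i ω ∂μ = 0)
    (he_indep : ∀ i j, i ≠ j → IndepFun (⇑(e i)) (⇑(e j)) μ)
    (hf_norm : ∀ i, ‖f i‖ = 1)
    (hf_mean : ∀ i, ∫ ω, f i ω ∂μ = 0)
    (hf_indep : ∀ i j, i ≠ j → IndepFun (⇑(f i)) (⇑(f j)) μ)
    (hef_indep : ∀ i j, i ≠ j → IndepFun (⇑(e i)) (⇑(f j)) μ)
    (hclose : ∀ i, ‖e i - f i‖ ≤ γ / 4)
    (hE : ∀ u ∈ Submodule.span ℝ (Set.range e), ∀ v ∈ Submodule.span ℝ (Set.range e),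
      ‖u‖ = 1 → ‖v‖ = 1 → γ ≤ ‖|u| ⊓ |v|‖) :
    (∀ x ∈ Submodule.span ℝ (Set.range f), ∀ y ∈ Submodule.span ℝ (Set.range f),
      ‖x‖ = 1 → ‖y‖ = 1 → γ / 2 ≤ ‖|x| ⊓ |y|‖) ∧
    (∃ C : ℝ, ∀ x ∈ Submodule.span ℝ (Set.range f), ∀ y ∈ Submodule.span ℝ (Set.range f),
      min ‖x - y‖ ‖x + y‖ ≤ C * ‖|x| - |y|‖) := by
  -- orthonormality of `f`
  have hf_on : Orthonormal ℝ f := by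
    rw [orthonormal_iff_ite]
    intro i j
    by_cases h : i = j
    · subst h
      simp only [if_true, real_inner_self_eq_norm_sq, hf_norm i, one_pow]
    · rw [if_neg h]
      exact SPR_inner_eq_zero_of_indep _ _ (hf_indep i j h) (hf_mean i)
  -- orthogonality of the differences
  have hdiff : ∀ i j, i ≠ j → (inner ℝ (f i - e i) (f j - e j) : ℝ) = 0 := by
    intro i j hij
    have h1 : (inner ℝ (f i) (f j) : ℝ) = 0 :=
      SPR_inner_eq_zero_of_indep _ _ (hf_indep i j hij) (hf_mean i)
    have h2 : (inner ℝ (f i) (e j) : ℝ) = 0 :=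
      SPR_inner_eq_zero_of_indep _ _ ((hef_indep j i hij.symm).symm) (hf_mean i)
    have h3 : (inner ℝ (e i) (f j) : ℝ) = 0 :=
      SPR_inner_eq_zero_of_indep _ _ (hef_indep i j hij) (he_mean i)
    have h4 : (inner ℝ (e i) (e j) : ℝ) = 0 :=
      SPR_inner_eq_zero_of_indep _ _ (he_indep i j hij) (he_mean i)
    rw [inner_sub_left, inner_sub_right, inner_sub_right, h1, h2, h3, h4]
    ring
  -- Part 1
  have part1 : ∀ x ∈ Submodule.span ℝ (Set.range f), ∀ y ∈ Submodule.span ℝ (Set.range f),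
      ‖x‖ = 1 → ‖y‖ = 1 → γ / 2 ≤ ‖|x| ⊓ |y|‖ := by
    intro x hx y hy hx1 hy1
    obtain ⟨x', hx'mem, hx'norm, hx'close⟩ :=
      SPR_key_approx e f γ he_on hf_on hdiff hclose hγ.le x hx
    obtain ⟨y', hy'mem, hy'norm, hy'close⟩ :=
      SPR_key_approx e f γ he_on hf_on hdiff hclose hγ.le y hy
    rw [hx1, mul_one] at hx'close
    rw [hy1, mul_one] at hy'close
    have hγle : γ ≤ ‖|x'| ⊓ |y'|‖ := hE x' hx'mem y' hy'mem (hx'norm.trans hx1)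
      (hy'norm.trans hy1)
    have key : ‖|x'| ⊓ |y'| - |x| ⊓ |y|‖ ≤ ‖x' - x‖ + ‖y' - y‖ :=
      (norm_inf_sub_inf_le_add_norm _ _ _ _).trans
        (add_le_add (norm_abs_sub_abs _ _) (norm_abs_sub_abs _ _))
    have tri : ‖|x'| ⊓ |y'|‖ ≤ ‖|x| ⊓ |y|‖ + ‖|x'| ⊓ |y'| - |x| ⊓ |y|‖ := by
      have := norm_sub_le ((|x'| ⊓ |y'|) - (|x| ⊓ |y|)) (-(|x| ⊓ |y|))
      simpa [sub_neg_eq_add, sub_add_cancel] using norm_le_norm_add_norm_sub' (|x'| ⊓ |y'|) (|x| ⊓ |y|)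
    have hxx : ‖x' - x‖ ≤ γ / 4 := by rwa [norm_sub_rev]
    have hyy : ‖y' - y‖ ≤ γ / 4 := by rwa [norm_sub_rev]
    linarith [hγle.trans (tri.trans (by linarith [key] : ‖|x| ⊓ |y|‖ + ‖|x'| ⊓ |y'| - |x| ⊓ |y|‖ ≤ ‖|x| ⊓ |y|‖ + (γ / 4 + γ / 4)))]
  refine ⟨part1, ⟨2 / γ, ?_⟩⟩
  -- Part 2
  intro x hx y hy
  set u := x - y with hu
  set v := x + y with hv
  have humem : u ∈ Submodule.span ℝ (Set.range f) := Submodule.sub_mem _ hx hy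
  have hvmem : v ∈ Submodule.span ℝ (Set.range f) := Submodule.add_mem _ hx hy
  -- Step A : ‖|u| ⊓ |v|‖ ≤ ‖|x| - |y|‖
  have stepA : ‖|u| ⊓ |v|‖ ≤ ‖|x| - |y|‖ := by
    have hle : |u| ⊓ |v| ≤ |(|x| - |y|)| := by
      rw [← Lp.coeFn_le]
      filter_upwards [Lp.coeFn_inf |u| |v|, Lp.coeFn_abs u, Lp.coeFn_abs v,
        Lp.coeFn_abs (|x| - |y|), Lp.coeFn_sub x y, Lp.coeFn_add x y,
        Lp.coeFn_sub |x| |y|, Lp.coeFn_abs x, Lp.coeFn_abs y] with ω h1 h2 h3 h4 h5 h6 h7 h8 h9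
      rw [h1, h4, h7]
      simp only [Pi.inf_apply, Pi.sub_apply, h2, h3, h8, h9]
      have h5' : u ω = x ω - y ω := by rw [hu] at *; rw [h5]; rfl
      have h6' : v ω = x ω + y ω := by rw [hv] at *; rw [h6]; rfl
      rw [h5', h6']
      exact SPR_min_abs_le (x ω) (y ω)
    have hnn : (0 : Lp ℝ 2 μ) ≤ |u| ⊓ |v| := le_inf (abs_nonneg u) (abs_nonneg v)
    have habs : |(|u| ⊓ |v|)| ≤ |(|(|x| - |y|)|)| :=
      (abs_of_nonneg hnn).le.trans (hle.trans (le_abs_self _))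
    have h2 : ‖|u| ⊓ |v|‖ ≤ ‖|(|x| - |y|)|‖ := HasSolidNorm.solid habs
    rwa [norm_abs_eq_norm] at h2
  -- Step B : γ/2 * min ‖u‖ ‖v‖ ≤ ‖|u| ⊓ |v|‖
  rcases eq_or_ne u 0 with hu0 | hu0
  · calc min ‖u‖ ‖v‖ ≤ ‖u‖ := min_le_left _ _
      _ = 0 := by rw [hu0, norm_zero]
      _ ≤ 2 / γ * ‖|x| - |y|‖ := by positivity
  rcases eq_or_ne v 0 with hv0 | hv0
  · calc min ‖u‖ ‖v‖ ≤ ‖v‖ := min_le_right _ _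
      _ = 0 := by rw [hv0, norm_zero]
      _ ≤ 2 / γ * ‖|x| - |y|‖ := by positivity
  have hun : 0 < ‖u‖ := norm_pos_iff.mpr hu0
  have hvn : 0 < ‖v‖ := norm_pos_iff.mpr hv0
  set m := min ‖u‖ ‖v‖ with hm
  have hm0 : 0 < m := lt_min hun hvn
  set uhat := (‖u‖⁻¹ : ℝ) • u with huhat
  set vhat := (‖v‖⁻¹ : ℝ) • v with hvhat
  have huhat1 : ‖uhat‖ = 1 := by
    rw [huhat, norm_smul, norm_inv, norm_norm, inv_mul_cancel₀ hun.ne']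
  have hvhat1 : ‖vhat‖ = 1 := by
    rw [hvhat, norm_smul, norm_inv, norm_norm, inv_mul_cancel₀ hvn.ne']
  have huhatmem : uhat ∈ Submodule.span ℝ (Set.range f) := Submodule.smul_mem _ _ humem
  have hvhatmem : vhat ∈ Submodule.span ℝ (Set.range f) := Submodule.smul_mem _ _ hvmem
  have hpart1 := part1 uhat huhatmem vhat hvhatmem huhat1 hvhat1
  -- pointwise : m • (|uhat| ⊓ |vhat|) ≤ |u| ⊓ |v| and is nonneg
  have hsmul_le : m • (|uhat| ⊓ |vhat|) ≤ |u| ⊓ |v| := by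
    rw [← Lp.coeFn_le]
    filter_upwards [Lp.coeFn_smul m (|uhat| ⊓ |vhat|), Lp.coeFn_inf |uhat| |vhat|,
      Lp.coeFn_abs uhat, Lp.coeFn_abs vhat, Lp.coeFn_inf |u| |v|, Lp.coeFn_abs u,
      Lp.coeFn_abs v, Lp.coeFn_smul (‖u‖⁻¹ : ℝ) u, Lp.coeFn_smul (‖v‖⁻¹ : ℝ) v]
      with ω h1 h2 h3 h4 h5 h6 h7 h8 h9
    rw [h1, h5]
    simp only [Pi.smul_apply, Pi.inf_apply, smul_eq_mul]
    rw [h2]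
    simp only [Pi.inf_apply, h3, h4, h6, h7]
    have h8' : uhat ω = ‖u‖⁻¹ * u ω := by rw [huhat] at *; rw [h8]; simp
    have h9' : vhat ω = ‖v‖⁻¹ * v ω := by rw [hvhat] at *; rw [h9]; simp
    rw [h8', h9', abs_mul, abs_mul, abs_of_nonneg (inv_nonneg.mpr hun.le),
      abs_of_nonneg (inv_nonneg.mpr hvn.le)]
    have hmu : m * ‖u‖⁻¹ ≤ 1 := by
      rw [← le_div_iff₀ (inv_pos.mpr hun), one_div, inv_inv]
      exact min_le_left _ _
    have hmv : m * ‖v‖⁻¹ ≤ 1 := by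
      rw [← le_div_iff₀ (inv_pos.mpr hvn), one_div, inv_inv]
      exact min_le_right _ _
    refine le_min ?_ ?_
    · calc m * min (‖u‖⁻¹ * |u ω|) (‖v‖⁻¹ * |v ω|) ≤ m * (‖u‖⁻¹ * |u ω|) :=
            mul_le_mul_of_nonneg_left (min_le_left _ _) hm0.le
        _ = m * ‖u‖⁻¹ * |u ω| := by ring
        _ ≤ 1 * |u ω| := mul_le_mul_of_nonneg_right hmu (abs_nonneg _)
        _ = |u ω| := one_mul _
    · calc m * min (‖u‖⁻¹ * |u ω|) (‖v‖⁻¹ * |v ω|) ≤ m * (‖v‖⁻¹ * |v ω|) :=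
            mul_le_mul_of_nonneg_left (min_le_right _ _) hm0.le
        _ = m * ‖v‖⁻¹ * |v ω| := by ring
        _ ≤ 1 * |v ω| := mul_le_mul_of_nonneg_right hmv (abs_nonneg _)
        _ = |v ω| := one_mul _
  have hsmul_nonneg : (0 : Lp ℝ 2 μ) ≤ m • (|uhat| ⊓ |vhat|) := by
    rw [← Lp.coeFn_nonneg]
    filter_upwards [Lp.coeFn_smul m (|uhat| ⊓ |vhat|), Lp.coeFn_inf |uhat| |vhat|,
      Lp.coeFn_abs uhat, Lp.coeFn_abs vhat] with ω h1 h2 h3 h4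
    rw [h1]
    simp only [Pi.smul_apply, smul_eq_mul]
    rw [h2]
    simp only [Pi.inf_apply, h3, h4]
    have : (0:ℝ) ≤ min |uhat ω| |vhat ω| := le_min (abs_nonneg _) (abs_nonneg _)
    positivity
  have hnormle : ‖m • (|uhat| ⊓ |vhat|)‖ ≤ ‖|u| ⊓ |v|‖ := by
    have hnn : (0 : Lp ℝ 2 μ) ≤ |u| ⊓ |v| := le_inf (abs_nonneg u) (abs_nonneg v)
    have habs : |m • (|uhat| ⊓ |vhat|)| ≤ |(|u| ⊓ |v|)| := by
      rw [abs_of_nonneg hsmul_nonneg, abs_of_nonneg hnn]; exact hsmul_le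
    exact HasSolidNorm.solid habs
  have hsm : ‖m • (|uhat| ⊓ |vhat|)‖ = m * ‖|uhat| ⊓ |vhat|‖ := by
    rw [norm_smul, Real.norm_eq_abs, abs_of_nonneg hm0.le]
  have final : γ / 2 * m ≤ ‖|x| - |y|‖ := by
    calc γ / 2 * m = m * (γ / 2) := mul_comm _ _
      _ ≤ m * ‖|uhat| ⊓ |vhat|‖ := mul_le_mul_of_nonneg_left hpart1 hm0.le
      _ = ‖m • (|uhat| ⊓ |vhat|)‖ := hsm.symm
      _ ≤ ‖|u| ⊓ |v|‖ := hnormle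
      _ ≤ ‖|x| - |y|‖ := stepA
  calc m = 2 / γ * (γ / 2 * m) := by field_simp
    _ ≤ 2 / γ * ‖|x| - |y|‖ :=
        mul_le_mul_of_nonneg_left final (le_of_lt (div_pos two_pos hγ))
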